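/- (Lemma 1, sufficiency.) If a strategy profile Q with all Q_i > 0 satisfies both C1 (Σ_i Q_i = Q_tot) and C2 (h_i(Q) = h_j(Q) for all i, j), then Q is a Nash equilibrium of the demand-declaration game: no user i has a unilateral deviation Q_i' > 0 leading to a strictly preferred outcome. -/

import Mathlib

open Finset

private lemma aux_log_lb {a : ℝ} (ha : 0 < a) : a / (1 + a) ≤ Real.log (1 + a) := by
  have h1a : (0:ℝ) < 1 + a := by linarith
  have h := Real.log_le_sub_one_of_pos (show 0 < (1+a)⁻¹ by positivity)
  rw [Real.log_inv] at h
  have heq : 1 - (1+a)⁻¹ = a / (1 + a) := by field_simp; ring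
  linarith

private lemma aux_log_ub {b : ℝ} (hb : 0 < b) : Real.log (1 + b) ≤ b := by
  have h := Real.log_le_sub_one_of_pos (show (0:ℝ) < 1 + b by linarith)
  linarith

set_option maxHeartbeats 1000000 in
/-- Lemma 1, sufficiency: if a strategy profile Q of positive declared
demands satisfies C1 (Σ_i Q_i = Q_tot) and C2 (h_i(Q) = h_j(Q) for all i,j, where
h_i(Q) = Q_i(Ψ+c_i)/(Ψψ_i)), then Q is a Nash equilibrium of the demand-declaration
game: no user i has a unilateral deviation Q' > 0 yielding a strictly preferred
outcome (higher utility, or equal utility and strictly larger granted quota).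
Here `qalloc` assigns to each positive profile the (unique) maximizer of the social
welfare S over the feasible set of that profile. -/
theorem stmt_14 (N : ℕ) (hN : 1 ≤ N) (ψ c : Fin N → ℝ)
    (hψ : ∀ i, 0 < ψ i) (hc : ∀ i, 0 < c i)
    (Ψ Qtot : ℝ) (hΨ : 0 < Ψ) (hQtot : 0 < Qtot)
    (qalloc : (Fin N → ℝ) → Fin N → ℝ)
    (hqalloc : ∀ P : Fin N → ℝ, (∀ i, 0 < P i) →
      ((∀ i, 0 ≤ qalloc P i ∧ qalloc P i ≤ P i) ∧ ∑ i, qalloc P i ≤ Qtot) ∧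
      ∀ q' : Fin N → ℝ, ((∀ i, 0 ≤ q' i ∧ q' i ≤ P i) ∧ ∑ i, q' i ≤ Qtot) →
        ∑ i, ψ i * Real.log (1 + Ψ * q' i / (c i * P i)) ≤
          ∑ i, ψ i * Real.log (1 + Ψ * qalloc P i / (c i * P i)))
    (Q : Fin N → ℝ) (hQpos : ∀ i, 0 < Q i)
    (hC1 : ∑ i, Q i = Qtot)
    (hC2 : ∀ i j : Fin N, Q i * (Ψ + c i) / (Ψ * ψ i) = Q j * (Ψ + c j) / (Ψ * ψ j)) :
    ∀ i : Fin N, ∀ Q' : ℝ, 0 < Q' →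
      ¬ (Real.log (1 + Ψ * qalloc (Function.update Q i Q') i / (c i * Q')) >
           Real.log (1 + Ψ * qalloc Q i / (c i * Q i)) ∨
         (Real.log (1 + Ψ * qalloc (Function.update Q i Q') i / (c i * Q')) =
            Real.log (1 + Ψ * qalloc Q i / (c i * Q i)) ∧
          qalloc (Function.update Q i Q') i > qalloc Q i)) := by
  obtain ⟨⟨hfQ, hsQ⟩, hoQ⟩ := hqalloc Q hQpos
  intro i Q' hQ' hbad
  have hci := hc i
  have hQi := hQpos i
  have hψi := hψ i
  -- Step 1: the allocation at Q grants user i its full demand.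
  have hQQi : qalloc Q i = Q i := by
    by_contra hne
    have hlt : qalloc Q i < Q i := lt_of_le_of_ne (hfQ i).2 hne
    have hle := hoQ Q ⟨fun k => ⟨(hQpos k).le, le_refl _⟩, hC1.le⟩
    have hstrict : ∑ k, ψ k * Real.log (1 + Ψ * qalloc Q k / (c k * Q k)) <
        ∑ k, ψ k * Real.log (1 + Ψ * Q k / (c k * Q k)) := by
      refine Finset.sum_lt_sum (fun k _ => ?_) ⟨i, mem_univ i, ?_⟩
      · have h0 := (hfQ k).1
        have h1 := (hfQ k).2
        have hck := hc k; have hQk := hQpos k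
        refine mul_le_mul_of_nonneg_left ?_ (hψ k).le
        refine Real.log_le_log (by positivity) ?_
        gcongr
      · have h0 := (hfQ i).1
        refine mul_lt_mul_of_pos_left ?_ hψi
        refine Real.log_lt_log (by positivity) ?_
        gcongr
    linarith
  rw [hQQi] at hbad
  -- The deviated profile
  set P : Fin N → ℝ := Function.update Q i Q' with hPdef
  have hPpos : ∀ k, 0 < P k := by
    intro k
    rcases eq_or_ne k i with rfl | hk
    · simpa [hPdef] using hQ'
    · simpa [hPdef, Function.update_of_ne hk] using hQpos k
  obtain ⟨⟨hfP, hsP⟩, hoP⟩ := hqalloc P hPpos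
  have hPi : P i = Q' := by simp [hPdef]
  have h0P := (hfP i).1
  have h1P : qalloc P i ≤ Q' := hPi ▸ (hfP i).2
  -- In both cases, utility at the deviation is at most log(1+Ψ/c i).
  have hub : 1 + Ψ * qalloc P i / (c i * Q') ≤ 1 + Ψ * Q i / (c i * Q i) := by
    have e1 : Ψ * Q i / (c i * Q i) = Ψ / c i := by
      field_simp
    have e2 : Ψ * qalloc P i / (c i * Q') ≤ Ψ / c i := by
      rw [div_le_div_iff₀ (by positivity) hci]
      linarith [mul_le_mul_of_nonneg_left h1P (mul_pos hΨ hci).le]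
    linarith
  rcases hbad with h | ⟨heq, hgt⟩
  · exact absurd (Real.log_le_log (by positivity) hub) (not_le.mpr h)
  -- Equal-utility case: granted quota equals Q' fully.
  have hargpos1 : (0:ℝ) < 1 + Ψ * qalloc P i / (c i * Q') := by positivity
  have hargpos2 : (0:ℝ) < 1 + Ψ * Q i / (c i * Q i) := by positivity
  have hargeq : 1 + Ψ * qalloc P i / (c i * Q') = 1 + Ψ * Q i / (c i * Q i) := by
    have h := congrArg Real.exp heq
    rwa [Real.exp_log hargpos1, Real.exp_log hargpos2] at h
  have h2 : Ψ * qalloc P i / (c i * Q') = Ψ * Q i / (c i * Q i) := by linarith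
  have h2' := (div_eq_div_iff (by positivity) (by positivity)).mp h2
  have hqPi : qalloc P i = Q' := by
    have h3 : (Ψ * (c i * Q i)) * qalloc P i = (Ψ * (c i * Q i)) * Q' := by
      linear_combination h2'
    exact mul_left_cancel₀ (by positivity) h3
  have hQ'gt : Q i < Q' := hqPi ▸ hgt
  -- Find an under-allocated user j ≠ i.
  have hex : ∃ j, j ≠ i ∧ qalloc P j < Q j := by
    by_contra hno
    push_neg at hno
    have hsum1 : ∑ k ∈ univ.erase i, Q k ≤ ∑ k ∈ univ.erase i, qalloc P k :=
      Finset.sum_le_sum fun k hk => hno k (Finset.ne_of_mem_erase hk)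
    have e1 : Q i + ∑ k ∈ univ.erase i, Q k = ∑ k, Q k :=
      Finset.add_sum_erase _ _ (mem_univ i)
    have e2 : qalloc P i + ∑ k ∈ univ.erase i, qalloc P k = ∑ k, qalloc P k :=
      Finset.add_sum_erase _ _ (mem_univ i)
    rw [hqPi] at e2
    linarith
  obtain ⟨j, hji, hjlt⟩ := hex
  have hij : i ≠ j := hji.symm
  have hψj := hψ j; have hcj := hc j; have hQj := hQpos j
  have hqPj0 := (hfP j).1
  have hPj : P j = Q j := Function.update_of_ne hji Q' Q
  -- Choose the transfer amount ε
  have hGpos : 0 < ψ j * (Ψ + c i) * (Q' - Q i) :=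
    mul_pos (mul_pos hψj (by linarith)) (by linarith)
  set ε : ℝ := min (Q j - qalloc P j)
      (min (Q' / 2) (ψ j * (Ψ + c i) * (Q' - Q i) / (2 * Ψ * (ψ i + ψ j)))) with hεdef
  have hεpos : 0 < ε :=
    lt_min (by linarith) (lt_min (by linarith) (div_pos hGpos (by positivity)))
  have hε1 : ε ≤ Q j - qalloc P j := min_le_left _ _
  have hε2 : ε ≤ Q' / 2 := le_trans (min_le_right _ _) (min_le_left _ _)
  have hε3 : ε ≤ ψ j * (Ψ + c i) * (Q' - Q i) / (2 * Ψ * (ψ i + ψ j)) :=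
    le_trans (min_le_right _ _) (min_le_right _ _)
  have hΨεB : Ψ * ε < (Ψ + c i) * Q' := by
    linarith [mul_le_mul_of_nonneg_left hε2 hΨ.le, mul_pos hci hQ', mul_pos hΨ hQ']
  -- key inequality from C2
  have heqq : ψ i * ((Ψ + c j) * Q j) = ψ j * ((Ψ + c i) * Q i) := by
    have h := (div_eq_div_iff (by positivity) (by positivity)).mp (hC2 i j)
    have h4 : Ψ * (ψ i * ((Ψ + c j) * Q j)) = Ψ * (ψ j * ((Ψ + c i) * Q i)) := by
      linear_combination -h
    exact mul_left_cancel₀ hΨ.ne' h4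
  have hstep2 : ε * (2 * Ψ * (ψ i + ψ j)) ≤ ψ j * (Ψ + c i) * (Q' - Q i) :=
    (le_div_iff₀ (by positivity)).mp hε3
  have key : ψ i * (c j * Q j + Ψ * qalloc P j + Ψ * ε) <
      ψ j * ((Ψ + c i) * Q' - Ψ * ε) := by
    have k1 : (ψ i * Ψ) * qalloc P j ≤ (ψ i * Ψ) * Q j :=
      mul_le_mul_of_nonneg_left hjlt.le (mul_pos hψi hΨ).le
    have k2 : (0:ℝ) < (Ψ * ε) * (ψ i + ψ j) :=
      mul_pos (mul_pos hΨ hεpos) (by linarith)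
    linarith [k1, k2, heqq, hstep2]
  -- The improved allocation
  set q2 : Fin N → ℝ :=
    Function.update (Function.update (qalloc P) i (Q' - ε)) j (qalloc P j + ε) with hq2def
  have hq2i : q2 i = Q' - ε := by
    simp [hq2def, Function.update_of_ne hij]
  have hq2j : q2 j = qalloc P j + ε := by simp [hq2def]
  have hq2k : ∀ k, k ≠ i → k ≠ j → q2 k = qalloc P k := by
    intro k h1 h2
    simp [hq2def, Function.update_of_ne h1, Function.update_of_ne h2]
  have hq2feas : (∀ k, 0 ≤ q2 k ∧ q2 k ≤ P k) ∧ ∑ k, q2 k ≤ Qtot := by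
    constructor
    · intro k
      rcases eq_or_ne k i with rfl | hk1
      · rw [hq2i, hPi]; constructor <;> linarith
      rcases eq_or_ne k j with rfl | hk2
      · rw [hq2j, hPj]; constructor <;> linarith
      · rw [hq2k k hk1 hk2]; exact hfP k
    · have hsplit : ∑ k, q2 k - ∑ k, qalloc P k =
          (q2 i - qalloc P i) + (q2 j - qalloc P j) := by
        rw [← Finset.sum_sub_distrib,
          show ∑ k, (q2 k - qalloc P k) =
            ∑ k ∈ ({i, j} : Finset (Fin N)), (q2 k - qalloc P k) from
            (Finset.sum_subset (Finset.subset_univ _) (fun k _ hk => by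
              simp only [Finset.mem_insert, Finset.mem_singleton, not_or] at hk
              rw [hq2k k hk.1 hk.2]; ring)).symm,
          Finset.sum_pair hij]
      rw [hq2i, hq2j, hqPi] at hsplit
      have : ∑ k, q2 k = ∑ k, qalloc P k := by linarith
      linarith
  have hopt := hoP q2 hq2feas
  -- Welfare difference splits into the i and j terms
  have hSsplit : ∑ k, ψ k * Real.log (1 + Ψ * q2 k / (c k * P k)) -
      ∑ k, ψ k * Real.log (1 + Ψ * qalloc P k / (c k * P k)) =
      (ψ i * Real.log (1 + Ψ * q2 i / (c i * P i)) -
        ψ i * Real.log (1 + Ψ * qalloc P i / (c i * P i))) +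
      (ψ j * Real.log (1 + Ψ * q2 j / (c j * P j)) -
        ψ j * Real.log (1 + Ψ * qalloc P j / (c j * P j))) := by
    rw [← Finset.sum_sub_distrib,
      show ∑ k, (ψ k * Real.log (1 + Ψ * q2 k / (c k * P k)) -
          ψ k * Real.log (1 + Ψ * qalloc P k / (c k * P k))) =
        ∑ k ∈ ({i, j} : Finset (Fin N)), (ψ k * Real.log (1 + Ψ * q2 k / (c k * P k)) -
          ψ k * Real.log (1 + Ψ * qalloc P k / (c k * P k))) from
        (Finset.sum_subset (Finset.subset_univ _) (fun k _ hk => by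
          simp only [Finset.mem_insert, Finset.mem_singleton, not_or] at hk
          rw [hq2k k hk.1 hk.2]; ring)).symm,
      Finset.sum_pair hij]
  -- the j-term difference, rewritten as log(1 + a)
  have hDpos : (0:ℝ) < c j * Q j + Ψ * qalloc P j := by positivity
  have hlogj : Real.log (1 + Ψ * (qalloc P j + ε) / (c j * Q j)) -
      Real.log (1 + Ψ * qalloc P j / (c j * Q j)) =
      Real.log (1 + Ψ * ε / (c j * Q j + Ψ * qalloc P j)) := by
    rw [← Real.log_div (by positivity) (by positivity)]
    congr 1
    field_simp
    ring
  -- the i-term difference, rewritten as log(1 + b)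
  have hQ'ε : (0:ℝ) ≤ Q' - ε := by linarith
  have hBpos : (0:ℝ) < (Ψ + c i) * Q' - Ψ * ε := by linarith
  have hipos : (0:ℝ) < 1 + Ψ * (Q' - ε) / (c i * Q') := by
    have : (0:ℝ) ≤ Ψ * (Q' - ε) / (c i * Q') :=
      div_nonneg (mul_nonneg hΨ.le hQ'ε) (by positivity)
    linarith
  have hlogi : Real.log (1 + Ψ * Q' / (c i * Q')) -
      Real.log (1 + Ψ * (Q' - ε) / (c i * Q')) =
      Real.log (1 + Ψ * ε / ((Ψ + c i) * Q' - Ψ * ε)) := by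
    rw [← Real.log_div (by positivity) hipos.ne']
    congr 1
    have hD1 : c i * Q' ≠ 0 := by positivity
    have hD2 : c i * Q' + Ψ * (Q' - ε) ≠ 0 := (show (0:ℝ) < c i * Q' + Ψ * (Q' - ε) by linarith).ne'
    rw [one_add_div hBpos.ne', one_add_div hD1, one_add_div hD1, div_div_div_cancel_right₀ hD1,
      div_eq_div_iff hD2 hBpos.ne']
    ring
  -- bounds
  have ha : (0:ℝ) < Ψ * ε / (c j * Q j + Ψ * qalloc P j) := by positivity
  have hb : (0:ℝ) < Ψ * ε / ((Ψ + c i) * Q' - Ψ * ε) := by positivity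
  have hlb := aux_log_lb ha
  have hub2 := aux_log_ub hb
  have hlb' : Ψ * ε / (c j * Q j + Ψ * qalloc P j + Ψ * ε) ≤
      Real.log (1 + Ψ * ε / (c j * Q j + Ψ * qalloc P j)) := by
    have hD2 : (0:ℝ) < c j * Q j + Ψ * qalloc P j + Ψ * ε := by positivity
    have heq2 : (Ψ * ε / (c j * Q j + Ψ * qalloc P j)) /
        (1 + Ψ * ε / (c j * Q j + Ψ * qalloc P j)) =
        Ψ * ε / (c j * Q j + Ψ * qalloc P j + Ψ * ε) := by
      rw [div_eq_div_iff (by positivity) hD2.ne']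
      field_simp
    linarith [heq2 ▸ hlb]
  -- middle strict inequality
  have hmid : ψ i * (Ψ * ε / ((Ψ + c i) * Q' - Ψ * ε)) <
      ψ j * (Ψ * ε / (c j * Q j + Ψ * qalloc P j + Ψ * ε)) := by
    rw [mul_div_assoc', mul_div_assoc', div_lt_div_iff₀ hBpos (by positivity)]
    linarith [mul_lt_mul_of_pos_left key (mul_pos hΨ hεpos)]
  -- assemble
  have hfinal : 0 < ∑ k, ψ k * Real.log (1 + Ψ * q2 k / (c k * P k)) -
      ∑ k, ψ k * Real.log (1 + Ψ * qalloc P k / (c k * P k)) := by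
    rw [hSsplit, hq2i, hq2j, hPi, hPj, hqPi]
    have e1 : ψ i * Real.log (1 + Ψ * (Q' - ε) / (c i * Q')) -
        ψ i * Real.log (1 + Ψ * Q' / (c i * Q')) =
        -(ψ i * (Real.log (1 + Ψ * Q' / (c i * Q')) -
          Real.log (1 + Ψ * (Q' - ε) / (c i * Q')))) := by ring
    have e2 : ψ j * Real.log (1 + Ψ * (qalloc P j + ε) / (c j * Q j)) -
        ψ j * Real.log (1 + Ψ * qalloc P j / (c j * Q j)) =
        ψ j * (Real.log (1 + Ψ * (qalloc P j + ε) / (c j * Q j)) -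
          Real.log (1 + Ψ * qalloc P j / (c j * Q j))) := by ring
    rw [e1, e2, hlogi, hlogj]
    linarith [hmid, mul_le_mul_of_nonneg_left hlb' hψj.le, mul_le_mul_of_nonneg_left hub2 hψi.le]
  linarith
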